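/- For every digraph D = (V, A) there exists a unique polynomial B_D(q,y,z) in three variables with rational coefficients such that for every positive integer q, B_D(q,y,z) = Σ_{f : V → {1,…,q}} y^{(number of ascents of f)} z^{(number of descents of f)}, where the sum is over all q-colorings f of D. -/

import Mathlib

open Finset

/-- The sum over all `q`-colorings `f : V → {1,…,q}` of a digraph (with arc set `A`,
source map `s` and target map `t`) of `y ^ (number of ascents of f) * z ^ (number of
descents of f)`. -/
def colorSum (V A : Type) [Fintype V] [DecidableEq V] [Fintype A]
    (s t : A → V) (q : ℕ) (y z : ℚ) : ℚ :=
  ∑ f : V → Fin q,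
    y ^ (Finset.univ.filter (fun a => f (s a) < f (t a))).card *
    z ^ (Finset.univ.filter (fun a => f (t a) < f (s a))).card

namespace BProof

variable (V A : Type) [Fintype V] [DecidableEq V] [Fintype A] (s t : A → V)

/-- The sum of the weights over surjective colorings with `k` colors. -/
def surjSum (k : ℕ) (y z : ℚ) : ℚ :=
  ∑ g ∈ (univ : Finset (V → Fin k)).filter (fun g => Function.Surjective g),
    y ^ (Finset.univ.filter (fun a => g (s a) < g (t a))).card *
    z ^ (Finset.univ.filter (fun a => g (t a) < g (s a))).card

/-- The polynomial version of `surjSum`. -/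
noncomputable def surjPoly (k : ℕ) : MvPolynomial (Fin 3) ℚ :=
  ∑ g ∈ (univ : Finset (V → Fin k)).filter (fun g => Function.Surjective g),
    MvPolynomial.X 1 ^ (Finset.univ.filter (fun a => g (s a) < g (t a))).card *
    MvPolynomial.X 2 ^ (Finset.univ.filter (fun a => g (t a) < g (s a))).card

/-- The candidate polynomial. -/
noncomputable def Bpoly : MvPolynomial (Fin 3) ℚ :=
  ∑ k ∈ Finset.range (Fintype.card V + 1),
    MvPolynomial.C ((k.factorial : ℚ)⁻¹) *
      Polynomial.aeval (MvPolynomial.X 0 : MvPolynomial (Fin 3) ℚ) (descPochhammer ℚ k) *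
      surjPoly V A s t k

lemma surjSum_eq_zero {k : ℕ} (hk : Fintype.card V < k) (y z : ℚ) :
    surjSum V A s t k y z = 0 := by
  unfold surjSum
  rw [Finset.sum_eq_zero]
  intro g hg
  exfalso
  have hsurj : Function.Surjective g := (Finset.mem_filter.mp hg).2
  have := Fintype.card_le_of_surjective g hsurj
  simp only [Fintype.card_fin] at this
  omega

lemma fiber_sum (q : ℕ) (T : Finset (Fin q)) (y z : ℚ) :
    ∑ f ∈ (univ : Finset (V → Fin q)).filter (fun f => univ.image f = T),
      (y ^ (Finset.univ.filter (fun a => f (s a) < f (t a))).card *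
       z ^ (Finset.univ.filter (fun a => f (t a) < f (s a))).card)
    = surjSum V A s t T.card y z := by
  classical
  unfold surjSum
  set e := T.orderIsoOfFin rfl with he
  have hmem : ∀ (f : V → Fin q),
      f ∈ (univ : Finset (V → Fin q)).filter (fun f => univ.image f = T) →
      ∀ v : V, f v ∈ T := by
    intro f hf v
    have h := (Finset.mem_filter.mp hf).2
    rw [← h]
    exact Finset.mem_image_of_mem f (Finset.mem_univ v)
  refine Finset.sum_bij'
    (fun f hf => fun v => e.symm ⟨f v, hmem f hf v⟩)
    (fun g _ => fun v => (e (g v) : Fin q)) ?_ ?_ ?_ ?_ ?_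
  · -- maps into surjective functions
    intro f hf
    rw [Finset.mem_filter]
    refine ⟨Finset.mem_univ _, ?_⟩
    intro j
    have hj : (e j : Fin q) ∈ T := (e j).2
    have h := (Finset.mem_filter.mp hf).2
    have hj' : (e j : Fin q) ∈ univ.image f := by rw [h]; exact hj
    obtain ⟨v, _, hv⟩ := Finset.mem_image.mp hj'
    refine ⟨v, ?_⟩
    show e.symm ⟨f v, hmem f hf v⟩ = j
    have hv' : (⟨f v, hmem f hf v⟩ : {x // x ∈ T}) = e j := Subtype.ext hv
    rw [hv', OrderIso.symm_apply_apply]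
  · -- maps back into fiber
    intro g hg
    rw [Finset.mem_filter]
    refine ⟨Finset.mem_univ _, ?_⟩
    have hsurj : Function.Surjective g := (Finset.mem_filter.mp hg).2
    ext x
    simp only [Finset.mem_image, Finset.mem_univ, true_and]
    constructor
    · rintro ⟨v, rfl⟩
      exact (e (g v)).2
    · intro hx
      obtain ⟨v, hv⟩ := hsurj (e.symm ⟨x, hx⟩)
      refine ⟨v, ?_⟩
      rw [hv, OrderIso.apply_symm_apply]
  · -- left inverse
    intro f hf
    funext v
    simp only [OrderIso.apply_symm_apply]
  · -- right inverse
    intro g hg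
    funext v
    simp only [Subtype.coe_eta, OrderIso.symm_apply_apply]
  · -- weights agree
    intro f hf
    congr 2 <;>
    · congr 1
      apply Finset.filter_congr
      intro a _
      simp only [eq_iff_iff, OrderIso.lt_iff_lt, Subtype.mk_lt_mk]

lemma colorSum_eq (q : ℕ) (y z : ℚ) :
    colorSum V A s t q y z =
      ∑ k ∈ Finset.range (Fintype.card V + 1),
        (q.choose k : ℚ) * surjSum V A s t k y z := by
  classical
  have h1 : colorSum V A s t q y z
      = ∑ T ∈ (univ : Finset (Finset (Fin q))), surjSum V A s t T.card y z := by
    unfold colorSum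
    rw [← Finset.sum_fiberwise_of_maps_to
      (g := fun f : V → Fin q => univ.image f) (t := (univ : Finset (Finset (Fin q))))
      (fun f _ => Finset.mem_univ _)]
    exact Finset.sum_congr rfl fun T _ => fiber_sum V A s t q T y z
  have h2 : ∑ T ∈ (univ : Finset (Finset (Fin q))), surjSum V A s t T.card y z
      = ∑ k ∈ Finset.range (q + 1), (q.choose k : ℚ) * surjSum V A s t k y z := by
    rw [← Finset.sum_fiberwise_of_maps_to
      (g := fun T : Finset (Fin q) => T.card) (t := Finset.range (q + 1))
      (fun T _ => by
        simp only [Finset.mem_range]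
        have := Finset.card_le_univ T
        simp only [Finset.card_univ, Fintype.card_fin] at this
        omega)]
    refine Finset.sum_congr rfl fun k _ => ?_
    have hconst : ∀ T ∈ (univ : Finset (Finset (Fin q))).filter (fun T => T.card = k),
        surjSum V A s t T.card y z = surjSum V A s t k y z := by
      intro T hT
      rw [(Finset.mem_filter.mp hT).2]
    rw [Finset.sum_congr rfl hconst, Finset.sum_const, nsmul_eq_mul]
    congr 1
    have : (univ : Finset (Finset (Fin q))).filter (fun T => T.card = k)
        = Finset.powersetCard k (univ : Finset (Fin q)) := by
      rw [Finset.powersetCard_eq_filter, Finset.powerset_univ]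
    rw [this, Finset.card_powersetCard]
    simp
  rw [h1, h2]
  -- reindex: both sums equal the sum over a common large range
  set n := Fintype.card V with hn
  have key : ∀ m : Finset ℕ, Finset.range (q + 1) ⊆ m → Finset.range (n + 1) ⊆ m →
      (∀ k ∈ m, q + 1 ≤ k ∨ n + 1 ≤ k →
        (q.choose k : ℚ) * surjSum V A s t k y z = 0) → True := fun _ _ _ _ => trivial
  have hzero : ∀ k, q < k ∨ n < k → (q.choose k : ℚ) * surjSum V A s t k y z = 0 := by
    intro k hk
    rcases hk with hk | hk
    · rw [Nat.choose_eq_zero_of_lt hk]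
      simp
    · rw [surjSum_eq_zero V A s t hk]
      ring
  have e1 : ∑ k ∈ Finset.range (q + 1), (q.choose k : ℚ) * surjSum V A s t k y z
      = ∑ k ∈ Finset.range (q + n + 2), (q.choose k : ℚ) * surjSum V A s t k y z := by
    apply Finset.sum_subset
    · apply Finset.range_subset_range.mpr; omega
    · intro k _ hk
      simp only [Finset.mem_range, not_lt] at hk
      exact hzero k (Or.inl (by omega))
  have e2 : ∑ k ∈ Finset.range (n + 1), (q.choose k : ℚ) * surjSum V A s t k y z
      = ∑ k ∈ Finset.range (q + n + 2), (q.choose k : ℚ) * surjSum V A s t k y z := by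
    apply Finset.sum_subset
    · apply Finset.range_subset_range.mpr; omega
    · intro k _ hk
      simp only [Finset.mem_range, not_lt] at hk
      exact hzero k (Or.inr (by omega))
  rw [e1, ← e2]

lemma aeval_eq_eval (v : Fin 3 → ℚ) (p : MvPolynomial (Fin 3) ℚ) :
    MvPolynomial.aeval v p = MvPolynomial.eval v p := by
  rfl

lemma eval_surjPoly (k : ℕ) (v : Fin 3 → ℚ) :
    MvPolynomial.eval v (surjPoly V A s t k) = surjSum V A s t k (v 1) (v 2) := by
  unfold surjPoly surjSum
  rw [map_sum]
  refine Finset.sum_congr rfl fun g _ => ?_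
  simp

lemma eval_Bpoly (q : ℕ) (y z : ℚ) :
    MvPolynomial.eval ![(q : ℚ), y, z] (Bpoly V A s t) = colorSum V A s t q y z := by
  rw [colorSum_eq V A s t q y z]
  unfold Bpoly
  rw [map_sum]
  refine Finset.sum_congr rfl fun k _ => ?_
  rw [map_mul, map_mul]
  have h1 : MvPolynomial.eval ![(q : ℚ), y, z]
      (Polynomial.aeval (MvPolynomial.X 0 : MvPolynomial (Fin 3) ℚ) (descPochhammer ℚ k))
      = (descPochhammer ℚ k).eval (q : ℚ) := by
    rw [← aeval_eq_eval]
    rw [← Polynomial.aeval_algHom_apply (MvPolynomial.aeval ![(q : ℚ), y, z])]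
    rw [aeval_eq_eval]
    simp [Polynomial.coe_aeval_eq_eval]
  rw [h1, eval_surjPoly]
  rw [descPochhammer_eval_eq_descFactorial]
  rw [Nat.descFactorial_eq_factorial_mul_choose]
  simp only [MvPolynomial.eval_C, Nat.cast_mul, Matrix.cons_val_one, Matrix.head_cons,
    Matrix.cons_val_two, Matrix.tail_cons, Matrix.cons_val_zero]
  have hfac : (k.factorial : ℚ) ≠ 0 := Nat.cast_ne_zero.mpr k.factorial_ne_zero
  field_simp

end BProof

/-- for every digraph `D = (V,A)` there exists a unique trivariate
polynomial `B_D(q,y,z)` with rational coefficients such that for every positive integer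
`q`, `B_D(q,y,z) = Σ_{f : V → [q]} y^{#ascents of f} z^{#descents of f}`. -/
theorem existsUnique_B_polynomial (V A : Type) [Fintype V] [DecidableEq V] [Fintype A]
    (s t : A → V) :
    ∃! B : MvPolynomial (Fin 3) ℚ, ∀ q : ℕ, 0 < q → ∀ y z : ℚ,
      MvPolynomial.eval ![(q : ℚ), y, z] B = colorSum V A s t q y z := by
  refine ⟨BProof.Bpoly V A s t, fun q _ y z => BProof.eval_Bpoly V A s t q y z, ?_⟩
  intro B hB
  -- uniqueness
  have key : ∀ (B₁ B₂ : MvPolynomial (Fin 3) ℚ),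
      (∀ q : ℕ, 0 < q → ∀ y z : ℚ,
        MvPolynomial.eval ![(q : ℚ), y, z] B₁ = MvPolynomial.eval ![(q : ℚ), y, z] B₂) →
      B₁ = B₂ := by
    intro B₁ B₂ h
    apply MvPolynomial.funext
    intro x
    have hx : x = ![x 0, x 1, x 2] := by
      funext i
      fin_cases i <;> rfl
    set y := x 1
    set z := x 2
    -- one-variable polynomial in the first coordinate
    set P : Polynomial ℚ :=
      MvPolynomial.aeval ![Polynomial.X, Polynomial.C y, Polynomial.C z] (B₁ - B₂) with hP
    have hPeval : ∀ a : ℚ, P.eval a = MvPolynomial.eval ![a, y, z] (B₁ - B₂) := by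
      intro a
      have := MvPolynomial.comp_aeval
        (f := ![Polynomial.X, Polynomial.C y, Polynomial.C z])
        (φ := Polynomial.aeval a (R := ℚ))
      have happ := congrArg (fun φ => φ (B₁ - B₂)) this
      simp only [AlgHom.coe_comp, Function.comp_apply] at happ
      have hvec : (fun i => Polynomial.aeval a (![Polynomial.X, Polynomial.C y, Polynomial.C z] i))
          = ![a, y, z] := by
        funext i
        fin_cases i <;> simp
      rw [hvec] at happ
      rw [hP, ← Polynomial.coe_aeval_eq_eval, happ, BProof.aeval_eq_eval]
    have hProots : ∀ q : ℕ, 0 < q → P.eval (q : ℚ) = 0 := by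
      intro q hq
      rw [hPeval, map_sub, h q hq y z, sub_self]
    have hP0 : P = 0 := by
      apply Polynomial.eq_zero_of_infinite_isRoot
      refine Set.infinite_of_injective_forall_mem
        (f := fun n : ℕ => ((n + 1 : ℕ) : ℚ)) ?_ ?_
      · intro a b hab
        simp only [Nat.cast_inj] at hab
        omega
      · intro n
        exact hProots (n + 1) (Nat.succ_pos n)
    have := hPeval (x 0)
    rw [hP0] at this
    simp only [Polynomial.eval_zero] at this
    rw [hx]
    have h2 : MvPolynomial.eval ![x 0, y, z] B₁ - MvPolynomial.eval ![x 0, y, z] B₂ = 0 := by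
      rw [← map_sub]; exact this.symm
    linarith [h2]
  exact key B (BProof.Bpoly V A s t) (fun q hq y z => by
    rw [hB q hq y z, BProof.eval_Bpoly V A s t q y z])
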